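/- The alternating inversion statistic î is Mahonian: ∑_{σ∈Sₙ} q^{î(σ)} = (1+q)(1+q+q²)⋯(1+q+⋯+q^{n−1}). -/

import Mathlib

open Finset
open scoped Classical

/-- entry of a permutation of `Fin n` at 0-indexed position `i` (0-based values). -/
def ent {n : ℕ} (σ : Equiv.Perm (Fin n)) (i : ℕ) : ℕ :=
  if h : i < n then (σ ⟨i, h⟩ : ℕ) else 0

/-- the triple `(a, b, c)` of distinct values, reduced to a permutation in `S₃`, is odd. -/
def odd3 (a b c : ℕ) : Prop :=
  ((if b < a then 1 else 0) + (if c < a then 1 else 0) + (if c < b then 1 else 0)) % 2 = 1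

instance (a b c : ℕ) : Decidable (odd3 a b c) := by
  unfold odd3; infer_instance

/-- 3-descent set, 0-indexed positions (position `i` here is paper position `i+1`). -/
def D3 {n : ℕ} (σ : Equiv.Perm (Fin n)) : Finset ℕ :=
  (Finset.range (n - 2)).filter (fun i => odd3 (ent σ i) (ent σ (i + 1)) (ent σ (i + 2)))

/-- alternating descent set, 0-indexed positions. -/
def altD {n : ℕ} (σ : Equiv.Perm (Fin n)) : Finset ℕ :=
  (Finset.range (n - 1)).filter (fun i =>
    (Even i ∧ ent σ (i + 1) < ent σ i) ∨ (¬ Even i ∧ ent σ i < ent σ (i + 1)))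

/-- number of up-down alternating permutations of `[n]` (the Euler number `Eₙ`). -/
noncomputable def EulerNum (n : ℕ) : ℕ :=
  ((Finset.univ : Finset (Equiv.Perm (Fin n))).filter (fun τ =>
    ∀ i ∈ Finset.range (n - 1),
      (Even i ∧ ent τ i < ent τ (i + 1)) ∨ (¬ Even i ∧ ent τ (i + 1) < ent τ i))).card

/-- `c³ᵢ(σ)`, 0-indexed: number of `j > i+1` with `σᵢ σᵢ₊₁ σⱼ` odd. -/
def c3 {n : ℕ} (σ : Equiv.Perm (Fin n)) (i : ℕ) : ℕ :=
  ((Finset.range n).filter (fun j => i + 1 < j ∧ odd3 (ent σ i) (ent σ (i + 1)) (ent σ j))).card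

/-- `ĉᵢ(σ)`, 0-indexed. -/
def chat {n : ℕ} (σ : Equiv.Perm (Fin n)) (i : ℕ) : ℕ :=
  ((Finset.range n).filter (fun j => i < j ∧
    ((Even i ∧ ent σ j < ent σ i) ∨ (¬ Even i ∧ ent σ i < ent σ j)))).card

/-- `i₃` of an arbitrary word `f 0, f 1, ..., f (m-1)`. -/
def i3f (m : ℕ) (f : ℕ → ℕ) : ℕ :=
  ((Finset.range m ×ˢ Finset.range m).filter (fun p =>
    p.1 + 1 < p.2 ∧ odd3 (f p.1) (f (p.1 + 1)) (f p.2))).card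

/-- the 3-inversion statistic `i₃`. -/
def i3 {n : ℕ} (σ : Equiv.Perm (Fin n)) : ℕ := i3f n (ent σ)

/-- the word `1*σ` (0-based values): `0, σ₀+1, σ₁+1, ...`. -/
def oneStar {n : ℕ} (σ : Equiv.Perm (Fin n)) : ℕ → ℕ :=
  fun i => if i = 0 then 0 else ent σ (i - 1) + 1

/-- number of alternating inversions `î(σ)`. -/
def altInv {n : ℕ} (σ : Equiv.Perm (Fin n)) : ℕ :=
  ((Finset.range n ×ˢ Finset.range n).filter (fun p => p.1 < p.2 ∧
    ((Even p.1 ∧ ent σ p.2 < ent σ p.1) ∨ (¬ Even p.1 ∧ ent σ p.1 < ent σ p.2)))).card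

/-- number of inversions of the word `f 0, ..., f (m-1)`. -/
def invf (m : ℕ) (f : ℕ → ℕ) : ℕ :=
  ((Finset.range m ×ˢ Finset.range m).filter (fun p => p.1 < p.2 ∧ f p.2 < f p.1)).card

/-- major index of the word `f 0, ..., f (m-1)` (descent at 0-indexed `i` contributes `i+1`). -/
def majf (m : ℕ) (f : ℕ → ℕ) : ℕ :=
  ∑ i ∈ (Finset.range (m - 1)).filter (fun i => f (i + 1) < f i), (i + 1)

/-- `Â(m, r)`: number of permutations of `[m]` with `r - 1` alternating descents. -/
def Ahat (m r : ℕ) : ℕ :=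
  ((Finset.univ : Finset (Equiv.Perm (Fin m))).filter (fun σ => (altD σ).card + 1 = r)).card

/-- down-up alternating: `σ₁ > σ₂ < σ₃ > ⋯`. -/
def DownUp {n : ℕ} (σ : Equiv.Perm (Fin n)) : Prop :=
  ∀ i ∈ Finset.range (n - 1),
    (Even i ∧ ent σ (i + 1) < ent σ i) ∨ (¬ Even i ∧ ent σ i < ent σ (i + 1))

instance {n : ℕ} (σ : Equiv.Perm (Fin n)) : Decidable (DownUp σ) := by
  unfold DownUp; infer_instance

/-- up-down alternating: `σ₁ < σ₂ > σ₃ < ⋯`. -/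
def UpDown {n : ℕ} (σ : Equiv.Perm (Fin n)) : Prop :=
  ∀ i ∈ Finset.range (n - 1),
    (Even i ∧ ent σ i < ent σ (i + 1)) ∨ (¬ Even i ∧ ent σ (i + 1) < ent σ i)

section Aux
open Finset Equiv

variable {n : ℕ}

lemma ent_lt' {n : ℕ} (σ : Equiv.Perm (Fin n)) {i : ℕ} (h : i < n) :
    ent σ i = (σ ⟨i, h⟩ : ℕ) := dif_pos h

/-- insert value `p` at the front, pattern `e` afterwards -/
def ins (p : Fin (n + 1)) (e : Equiv.Perm (Fin n)) : Equiv.Perm (Fin (n + 1)) :=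
  ((finSuccEquiv n).trans (Equiv.optionCongr e)).trans (finSuccEquiv' p).symm

lemma ins_zero (p : Fin (n + 1)) (e : Equiv.Perm (Fin n)) : ins p e 0 = p := by
  simp [ins, Equiv.trans_apply]

lemma ins_succ (p : Fin (n + 1)) (e : Equiv.Perm (Fin n)) (k : Fin n) :
    ins p e k.succ = p.succAbove (e k) := by
  simp [ins, Equiv.trans_apply]

lemma ent_ins_zero (p : Fin (n + 1)) (e : Equiv.Perm (Fin n)) :
    ent (ins p e) 0 = (p : ℕ) := by
  rw [ent_lt' _ (Nat.succ_pos n)]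
  norm_num [ins_zero]

lemma ent_ins_succ (p : Fin (n + 1)) (e : Equiv.Perm (Fin n)) {k : ℕ} (h : k < n) :
    ent (ins p e) (k + 1) = ((p.succAbove (e ⟨k, h⟩) : Fin (n + 1)) : ℕ) := by
  rw [ent_lt' _ (by omega : k + 1 < n + 1)]
  have : (⟨k + 1, by omega⟩ : Fin (n + 1)) = Fin.succ ⟨k, h⟩ := rfl
  rw [this, ins_succ]

lemma ins_bijective :
    Function.Bijective (fun pe : Fin (n + 1) × Equiv.Perm (Fin n) => ins pe.1 pe.2) := by
  rw [Fintype.bijective_iff_injective_and_card]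
  constructor
  · rintro ⟨p, e⟩ ⟨p', e'⟩ h
    simp only at h
    have hp : p = p' := by rw [← ins_zero p e, ← ins_zero p' e', h]
    subst hp
    have he : e = e' := by
      ext k
      have h2 := congrArg (fun σ : Equiv.Perm (Fin (n + 1)) => σ k.succ) h
      simp only [ins_succ] at h2
      have := Fin.succAbove_right_injective (p := p) h2
      exact congrArg Fin.val this
    rw [he]
  · simp [Fintype.card_perm, Nat.factorial_succ]

lemma succAbove_val_lt (p : Fin (n + 1)) (a b : Fin n) :
    ((p.succAbove a : Fin (n + 1)) : ℕ) < ((p.succAbove b : Fin (n + 1)) : ℕ) ↔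
      (a : ℕ) < (b : ℕ) := by
  rw [← Fin.lt_def, ← Fin.lt_def, Fin.succAbove_lt_succAbove_iff]

/-- parity-flipped alternating inversion statistic -/
def altInvFlip {n : ℕ} (e : Equiv.Perm (Fin n)) : ℕ :=
  ((Finset.range n ×ˢ Finset.range n).filter (fun q => q.1 < q.2 ∧
    ((Even q.1 ∧ ent e q.1 < ent e q.2) ∨ (¬ Even q.1 ∧ ent e q.2 < ent e q.1)))).card

lemma ent_zero' (σ : Equiv.Perm (Fin (n + 1))) :
    ent σ 0 = ((σ 0 : Fin (n + 1)) : ℕ) := by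
  rw [ent_lt' σ (Nat.succ_pos n)]
  congr 1

lemma card_first (σ : Equiv.Perm (Fin (n + 1))) :
    ((Finset.range (n + 1)).filter (fun j => 0 < j ∧ ent σ j < ent σ 0)).card
      = ((σ 0 : Fin (n + 1)) : ℕ) := by
  rw [← Finset.card_range ((σ 0 : Fin (n + 1)) : ℕ)]
  refine Finset.card_bij' (fun j _ => ent σ j)
      (fun x hx => ((σ.symm ⟨x, lt_trans (Finset.mem_range.mp hx) (σ 0).isLt⟩ : Fin (n + 1)) : ℕ))
      ?hi ?hj ?li ?ri
  case hi =>
    intro j hj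
    simp only [Finset.mem_filter, Finset.mem_range] at hj ⊢
    rw [ent_zero' σ] at hj
    exact hj.2.2
  case hj =>
    intro x hx
    have hx' : x < ((σ 0 : Fin (n + 1)) : ℕ) := Finset.mem_range.mp hx
    simp only [Finset.mem_filter, Finset.mem_range]
    have hxlt : x < n + 1 := lt_trans hx' (σ 0).isLt
    set j : Fin (n + 1) := σ.symm ⟨x, lt_trans (Finset.mem_range.mp hx) (σ 0).isLt⟩ with hjdef
    have hσj : σ j = ⟨x, hxlt⟩ := σ.apply_symm_apply _
    have hent : ent σ (j : ℕ) = x := by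
      rw [ent_lt' σ j.isLt]
      simp [hσj]
    refine ⟨j.isLt, ?_, ?_⟩
    · rcases Nat.eq_zero_or_pos (j : ℕ) with h | h
      case inr => exact h
      case inl =>
        exfalso
        have hj0 : j = 0 := Fin.ext h
        rw [hj0] at hσj
        have : ((σ 0 : Fin (n+1)) : ℕ) = x := by rw [hσj]
        omega
    · rw [hent, ent_zero' σ]
      exact hx'
  case li =>
    intro j hj
    simp only [Finset.mem_filter, Finset.mem_range] at hj
    simp only [ent_lt' σ hj.1]
    simp [Fin.eta]
  case ri =>
    intro x hx
    rw [ent_lt' σ (Fin.is_lt _)]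
    simp

lemma cond_ins (p : Fin (n + 1)) (e : Equiv.Perm (Fin n)) {k l : ℕ} (hk : k < n) (hl : l < n) :
    ((Even (k + 1) ∧ ent (ins p e) (l + 1) < ent (ins p e) (k + 1)) ∨
      (¬ Even (k + 1) ∧ ent (ins p e) (k + 1) < ent (ins p e) (l + 1)))
    ↔ ((Even k ∧ ent e k < ent e l) ∨ (¬ Even k ∧ ent e l < ent e k)) := by
  rw [ent_ins_succ p e hk, ent_ins_succ p e hl, ent_lt' e hk, ent_lt' e hl,
    succAbove_val_lt, succAbove_val_lt, Nat.even_add_one]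
  tauto

lemma altInv_ins (p : Fin (n + 1)) (e : Equiv.Perm (Fin n)) :
    altInv (ins p e) = (p : ℕ) + altInvFlip e := by
  set σ := ins p e with hσ
  have h0 : ((σ 0 : Fin (n + 1)) : ℕ) = (p : ℕ) := by rw [hσ, ins_zero]
  unfold altInv
  rw [← Finset.card_filter_add_card_filter_not
    (p := fun pr : ℕ × ℕ => pr.1 = 0), Finset.filter_filter, Finset.filter_filter]
  congr 1
  · -- pairs with first coordinate 0
    rw [← h0, ← card_first σ]
    refine Finset.card_bij' (fun pr _ => pr.2) (fun j _ => ((0 : ℕ), j)) ?hi ?hj ?li ?ri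
    case hi =>
      rintro ⟨i, j⟩ h
      simp only [Finset.mem_filter, Finset.mem_product, Finset.mem_range] at h ⊢
      obtain ⟨⟨hi, hj⟩, ⟨hij, hc⟩, hzero⟩ := h
      subst hzero
      refine ⟨hj, hij, ?_⟩
      rcases hc with ⟨_, h⟩ | ⟨hne, _⟩
      · exact h
      · exact absurd Even.zero hne
    case hj =>
      intro j hj
      simp only [Finset.mem_filter, Finset.mem_range] at hj
      exact Finset.mem_filter.mpr ⟨Finset.mem_product.mpr
        ⟨Finset.mem_range.mpr (Nat.succ_pos n), Finset.mem_range.mpr hj.1⟩,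
        ⟨hj.2.1, Or.inl ⟨Even.zero, hj.2.2⟩⟩, rfl⟩
    case li =>
      rintro ⟨i, j⟩ h
      simp only [Finset.mem_filter] at h
      have : i = 0 := h.2.2
      simp [this]
    case ri =>
      intro j _
      rfl
  · -- pairs with first coordinate positive
    show _ = altInvFlip e
    unfold altInvFlip
    refine Finset.card_bij' (fun pr _ => (pr.1 - 1, pr.2 - 1))
      (fun qr _ => (qr.1 + 1, qr.2 + 1)) ?hi ?hj ?li ?ri
    case hi =>
      rintro ⟨i, j⟩ h
      simp only [Finset.mem_filter, Finset.mem_product, Finset.mem_range] at h ⊢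
      obtain ⟨⟨hi, hj⟩, ⟨hij, hc⟩, hzero⟩ := h
      obtain ⟨k, rfl⟩ : ∃ k, i = k + 1 := ⟨i - 1, by omega⟩
      obtain ⟨l, rfl⟩ : ∃ l, j = l + 1 := ⟨j - 1, by omega⟩
      have hk : k < n := by omega
      have hl : l < n := by omega
      simp only [Nat.add_sub_cancel]
      exact ⟨⟨hk, hl⟩, by omega, (cond_ins p e hk hl).mp hc⟩
    case hj =>
      rintro ⟨k, l⟩ h
      simp only [Finset.mem_filter, Finset.mem_product, Finset.mem_range] at h ⊢
      obtain ⟨⟨hk, hl⟩, hkl, hc⟩ := h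
      exact ⟨⟨by omega, by omega⟩, ⟨by omega, (cond_ins p e hk hl).mpr hc⟩, by omega⟩
    case li =>
      rintro ⟨i, j⟩ h
      simp only [Finset.mem_filter, Finset.mem_product, Finset.mem_range] at h
      have h1 : 1 ≤ i := by omega
      have h2 : 1 ≤ j := by omega
      simp only [Prod.mk.injEq]
      omega
    case ri =>
      rintro ⟨k, l⟩ _
      simp

lemma altInvFlip_eq (e : Equiv.Perm (Fin n)) :
    altInvFlip e = altInv (Fin.revPerm * e) := by
  unfold altInvFlip altInv
  congr 1
  apply Finset.filter_congr
  rintro ⟨i, j⟩ h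
  simp only [Finset.mem_product, Finset.mem_range] at h
  obtain ⟨hi, hj⟩ := h
  rw [ent_lt' e hi, ent_lt' e hj, ent_lt' (Fin.revPerm * e) hi, ent_lt' (Fin.revPerm * e) hj]
  simp only [Equiv.Perm.mul_apply, Fin.revPerm_apply, Fin.val_rev]
  have h1 := (e ⟨i, hi⟩).isLt
  have h2 := (e ⟨j, hj⟩).isLt
  by_cases he : Even i <;> simp [he] <;> omega

end Aux

theorem stmt8 (n : ℕ) :
    ∑ σ : Equiv.Perm (Fin n), (Polynomial.X : Polynomial ℚ) ^ (altInv σ) =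
      ∏ i ∈ Finset.range n, ∑ j ∈ Finset.range (i + 1), (Polynomial.X : Polynomial ℚ) ^ j := by
  induction n with
  | zero =>
    rw [Finset.range_zero, Finset.prod_empty]
    have h0 : ∀ σ : Equiv.Perm (Fin 0), altInv σ = 0 := by
      intro σ; simp [altInv]
    simp only [h0, pow_zero]
    rw [Finset.sum_const, Finset.card_univ, Fintype.card_perm]
    simp
  | succ n ih =>
    have h1 : ∑ σ : Equiv.Perm (Fin (n + 1)), (Polynomial.X : Polynomial ℚ) ^ (altInv σ) =
        ∑ pe : Fin (n + 1) × Equiv.Perm (Fin n),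
          (Polynomial.X : Polynomial ℚ) ^ (altInv (ins pe.1 pe.2)) :=
      (Fintype.sum_bijective _ ins_bijective _ _ (fun pe => rfl)).symm
    have hflip : ∑ e : Equiv.Perm (Fin n), (Polynomial.X : Polynomial ℚ) ^ (altInvFlip e) =
        ∑ e : Equiv.Perm (Fin n), (Polynomial.X : Polynomial ℚ) ^ (altInv e) :=
      Fintype.sum_bijective (fun e : Equiv.Perm (Fin n) => Fin.revPerm * e)
        (Group.mulLeft_bijective _) _ _ (fun e => by rw [altInvFlip_eq e])
    rw [h1, Fintype.sum_prod_type]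
    simp_rw [altInv_ins, pow_add, ← Finset.mul_sum]
    rw [← Finset.sum_mul, hflip, ih, Finset.prod_range_succ, mul_comm]
    congr 1
    exact Fin.sum_univ_eq_sum_range (fun j => (Polynomial.X : Polynomial ℚ) ^ j) (n + 1)
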